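/- (Theorem 1: expected number of erroneous surviving paths.) Fix integers K ≥ j ≥ 1 and n ≥ j, fragment information lengths m : {0,…,j−1} → ℕ, and parity lengths l : {1,…,j−1} → ℕ. Let the message tuple W : {1,…,K} → ∏_{ℓ=0}^{j−1} F₂^{m(ℓ)} be uniformly random and, independently, let the generator blocks G_{ℓ,q−1} ∈ F₂^{m(ℓ)×l(q)} (0 ≤ ℓ ≤ q−1 ≤ j−2) be independent and uniformly random. Let L_{j−1} be the number of index sequences i : {0,…,j−1} → {1,…,K} with i(0)=1 that are erroneous (i is not identically 1) and survive, i.e., Σ_{ℓ=0}^{q−1} ( W_{i(ℓ)}(ℓ) + W_{i(q)}(ℓ) )·G_{ℓ,q−1} = 0 for all q = 1,…,j−1. Then E[L_{j−1}] = Σ_{s ∈ P_j} n(s) · E_W[ ∏_{q=1}^{j−1} ( 2^(−l(q)) if A_{q,s}(W) fails, and 1 if A_{q,s}(W) holds ) ] − 1, where n(s) = ∏_{t=1}^{d(s)−1} (K−t) and A_{q,s}(W) is the event that W_{s(q)}(ℓ) = W_{s(ℓ)}(ℓ) for every ℓ < q with s(ℓ) ≠ s(q). -/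

import Mathlib

/-- A `j`-pattern sequence: `s 0 = 1` and each subsequent value is either `ℓ + 1`
(a fresh label) or equal to an earlier value. -/
def IsPatternSeq (j : ℕ) (s : Fin j → ℕ) : Prop :=
  (∀ h0 : 0 < j, s ⟨0, h0⟩ = 1) ∧
  ∀ ℓ : Fin j, 1 ≤ ℓ.val → (s ℓ = ℓ.val + 1 ∨ ∃ q : Fin j, q < ℓ ∧ s ℓ = s q)

/-- A message tuple: `K` messages, each consisting of `j` fragments, the `ℓ`-th
fragment being a row vector in `F₂^{m ℓ}`. -/
abbrev MsgTuple (K j : ℕ) (m : Fin j → ℕ) : Type :=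
  Fin K → (ℓ : Fin j) → Fin (m ℓ) → ZMod 2

/-- A tuple of generator blocks `G_{ℓ,q-1} ∈ F₂^{m ℓ × l q}`, one for each pair
`0 ≤ ℓ < q ≤ j-1`. -/
abbrev GenTuple (j : ℕ) (m l : Fin j → ℕ) : Type :=
  (q : Fin j) → (ℓ : Fin j) → ℓ.val < q.val → Matrix (Fin (m ℓ)) (Fin (l q)) (ZMod 2)

/-- The event `A_{q,s}(W)`: the fragments of message `s q` preceding slot `q` and
belonging to different levels of the pattern `s` coincide with the corresponding
fragments on the path, rendering the parity bits of sub-block `q` non-discriminating.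
Pattern values in `{1,…,K}` are read as message indices via `t ↦ (t-1) % K`. -/
def AEvent (K j : ℕ) (hK : 0 < K) (m : Fin j → ℕ) (s : Fin j → ℕ) (q : Fin j)
    (W : MsgTuple K j m) : Prop :=
  ∀ ℓ : Fin j, ℓ < q → s ℓ ≠ s q →
    W ⟨(s q - 1) % K, Nat.mod_lt _ hK⟩ ℓ = W ⟨(s ℓ - 1) % K, Nat.mod_lt _ hK⟩ ℓ

open Finset

lemma card_ker_mul_card_eq {A B : Type*} [AddCommGroup A] [AddCommGroup B]
    [Fintype A] [Fintype B] (φ : A →+ B) (hφ : Function.Surjective φ) :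
    Nat.card {a : A // φ a = 0} * Nat.card B = Nat.card A := by
  have h1 : Nat.card {a : A // φ a = 0} = Nat.card φ.ker := by
    apply Nat.card_congr
    exact (Equiv.subtypeEquivRight (fun a => (AddMonoidHom.mem_ker (f := φ)).symm))
  have h2 : Nat.card B = Nat.card (A ⧸ φ.ker) := by
    apply Nat.card_congr
    exact (QuotientAddGroup.quotientKerEquivOfSurjective φ hφ).toEquiv.symm
  rw [h1, h2, mul_comm]
  exact (AddSubgroup.card_eq_card_quotient_mul_card_addSubgroup φ.ker).symm

open scoped Classical in
lemma sum_indicator_ker {A B : Type*} [AddCommGroup A] [AddCommGroup B]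
    [Fintype A] [Fintype B] (φ : A →+ B) (hφ : Function.Surjective φ) :
    (∑ a : A, (if φ a = 0 then (1:ℚ) else 0)) * (Nat.card B : ℚ) = (Nat.card A : ℚ) := by
  have : (∑ a : A, (if φ a = 0 then (1:ℚ) else 0)) = ((univ.filter (fun a => φ a = 0)).card : ℚ) := by
    simp [Finset.sum_boole]
  rw [this]
  rw [← card_ker_mul_card_eq φ hφ]
  push_cast
  congr 1
  rw [Nat.card_eq_fintype_card, Fintype.card_subtype]

lemma zmod2_add_eq_zero_iff (a b : ZMod 2) : a + b = 0 ↔ a = b := by revert a b; decide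
lemma zmod2_ne_zero (a : ZMod 2) (h : a ≠ 0) : a = 1 := by revert h; revert a; decide

def curryEquiv {j : ℕ} (q : Fin j) (M : Fin j → Type*) :
    ((ℓ : Fin j) → ℓ.val < q.val → M ℓ) ≃ ((x : {ℓ : Fin j // ℓ.val < q.val}) → M x.1) :=
  ⟨fun g x => g x.1 x.2, fun g' ℓ h => g' ⟨ℓ, h⟩, fun _ => rfl, fun _ => rfl⟩

open Finset in
open scoped Classical in
lemma qsum (K j : ℕ) (m l : Fin j → ℕ) (W : MsgTuple K j m) (i : Fin j → Fin K) (q : Fin j) :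
    (∑ g : ((ℓ : Fin j) → ℓ.val < q.val → Matrix (Fin (m ℓ)) (Fin (l q)) (ZMod 2)),
      if (∑ ℓ : Fin j, if h : ℓ.val < q.val
          then Matrix.vecMul (fun t => W (i ℓ) ℓ t + W (i q) ℓ t) (g ℓ h)
          else 0) = 0 then (1:ℚ) else 0)
    = (Fintype.card ((ℓ : Fin j) → ℓ.val < q.val → Matrix (Fin (m ℓ)) (Fin (l q)) (ZMod 2)) : ℚ)
      * (if (∀ ℓ : Fin j, ℓ < q → W (i q) ℓ = W (i ℓ) ℓ) then 1 else (2:ℚ)^(-(l q : ℤ))) := by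
  by_cases hB : ∀ ℓ : Fin j, ℓ < q → W (i q) ℓ = W (i ℓ) ℓ
  · rw [if_pos hB, mul_one]
    have hzero : ∀ g : ((ℓ : Fin j) → ℓ.val < q.val → Matrix (Fin (m ℓ)) (Fin (l q)) (ZMod 2)),
        (∑ ℓ : Fin j, if h : ℓ.val < q.val
          then Matrix.vecMul (fun t => W (i ℓ) ℓ t + W (i q) ℓ t) (g ℓ h)
          else 0) = 0 := by
      intro g
      apply Finset.sum_eq_zero
      intro ℓ _
      by_cases h : ℓ.val < q.val
      · rw [dif_pos h]
        have hv : (fun t => W (i ℓ) ℓ t + W (i q) ℓ t) = 0 := by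
          funext t
          rw [hB ℓ (Fin.lt_def.mpr h)]
          exact (zmod2_add_eq_zero_iff _ _).mpr rfl
        rw [hv, Matrix.zero_vecMul]
      · rw [dif_neg h]
    simp only [hzero, if_true]
    simp [Finset.card_univ]
  · rw [if_neg hB]
    push_neg at hB
    obtain ⟨ℓ₀, hℓ₀q, hne⟩ := hB
    obtain ⟨t₀, ht₀⟩ := Function.ne_iff.mp hne
    set A' := ((x : {ℓ : Fin j // ℓ.val < q.val}) → Matrix (Fin (m x.1)) (Fin (l q)) (ZMod 2))
      with hA'
    set φfun : A' → (Fin (l q) → ZMod 2) := fun g =>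
      ∑ x : {ℓ : Fin j // ℓ.val < q.val},
        Matrix.vecMul (fun t => W (i x.1) x.1 t + W (i q) x.1 t) (g x) with hφfun
    have hadd : ∀ a b : A', φfun (a + b) = φfun a + φfun b := by
      intro a b
      simp only [hφfun, Pi.add_apply]
      rw [← Finset.sum_add_distrib]
      exact Finset.sum_congr rfl (fun x _ => Matrix.vecMul_add _ _ _)
    set φ : A' →+ (Fin (l q) → ZMod 2) := AddMonoidHom.mk' φfun hadd with hφ
    have hsurj : Function.Surjective φ := by
      intro c
      set x₀ : {ℓ : Fin j // ℓ.val < q.val} := ⟨ℓ₀, Fin.lt_def.mp hℓ₀q⟩ with hx₀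
      refine ⟨Function.update (0 : A') x₀ (Matrix.of fun t j' => if t = t₀ then c j' else 0), ?_⟩
      show φfun _ = c
      simp only [hφfun]
      rw [Finset.sum_eq_single x₀]
      · rw [Function.update_self]
        funext j'
        simp only [Matrix.vecMul, dotProduct, Matrix.of_apply]
        rw [Finset.sum_eq_single t₀]
        · rw [if_pos rfl]
          have hv : W (i ℓ₀) ℓ₀ t₀ + W (i q) ℓ₀ t₀ ≠ 0 := by
            intro h
            exact ht₀ ((zmod2_add_eq_zero_iff _ _).mp h).symm
          rw [zmod2_ne_zero _ hv, one_mul]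
        · intro t _ ht; rw [if_neg ht, mul_zero]
        · intro h; exact absurd (Finset.mem_univ _) h
      · intro x _ hx
        rw [Function.update_of_ne hx, Pi.zero_apply, Matrix.vecMul_zero]
      · intro h; exact absurd (Finset.mem_univ _) h
    have key : ∀ g : ((ℓ : Fin j) → ℓ.val < q.val → Matrix (Fin (m ℓ)) (Fin (l q)) (ZMod 2)),
        (∑ ℓ : Fin j, if h : ℓ.val < q.val
          then Matrix.vecMul (fun t => W (i ℓ) ℓ t + W (i q) ℓ t) (g ℓ h)
          else 0) = φ (curryEquiv q _ g) := by
      intro g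
      set f : Fin j → (Fin (l q) → ZMod 2) := fun ℓ =>
        if h : ℓ.val < q.val then Matrix.vecMul (fun t => W (i ℓ) ℓ t + W (i q) ℓ t) (g ℓ h)
        else 0 with hf
      have h2 : φ (curryEquiv q _ g) = ∑ x : {ℓ : Fin j // ℓ.val < q.val}, f x.1 := by
        show φfun _ = _
        simp only [hφfun]
        apply Finset.sum_congr rfl
        intro x _
        simp only [hf]
        rw [dif_pos x.2]
        rfl
      rw [h2, ← Finset.sum_subtype (univ.filter (fun ℓ : Fin j => ℓ.val < q.val)) (by simp) f]
      symm
      apply Finset.sum_subset (Finset.filter_subset _ _)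
      intro x _ hx
      simp only [hf]
      rw [dif_neg (by simpa using hx)]
    have hsum : (∑ g : ((ℓ : Fin j) → ℓ.val < q.val → Matrix (Fin (m ℓ)) (Fin (l q)) (ZMod 2)),
        if (∑ ℓ : Fin j, if h : ℓ.val < q.val
          then Matrix.vecMul (fun t => W (i ℓ) ℓ t + W (i q) ℓ t) (g ℓ h)
          else 0) = 0 then (1:ℚ) else 0)
        = ∑ g' : A', if φ g' = 0 then (1:ℚ) else 0 := by
      apply Fintype.sum_equiv (curryEquiv q _)
      intro g
      rw [key g]
    rw [hsum]
    have hcard := sum_indicator_ker φ hsurj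
    have hB2 : (Nat.card (Fin (l q) → ZMod 2) : ℚ) = 2 ^ (l q) := by
      simp [Nat.card_eq_fintype_card]
    have hA : (Nat.card A' : ℚ)
        = (Fintype.card ((ℓ : Fin j) → ℓ.val < q.val → Matrix (Fin (m ℓ)) (Fin (l q)) (ZMod 2)) : ℚ) := by
      rw [Nat.card_eq_fintype_card]
      exact_mod_cast Fintype.card_congr ((curryEquiv q (fun ℓ => Matrix (Fin (m ℓ)) (Fin (l q)) (ZMod 2))).symm)
    rw [hB2, hA] at hcard
    have h2 : ((2:ℚ) ^ (l q)) ≠ 0 := by positivity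
    have hz : (2:ℚ) ^ (-(l q : ℤ)) = ((2:ℚ) ^ (l q))⁻¹ := by
      rw [zpow_neg, zpow_natCast]
    rw [hz, ← div_eq_mul_inv, eq_div_iff h2]
    convert hcard using 2
    exact Finset.sum_congr rfl fun a _ => by congr

section Pattern

variable {K j : ℕ}

open scoped Classical in
noncomputable def fo (i : Fin j → Fin K) (ℓ : Fin j) : ℕ :=
  Nat.find (p := fun r => ∃ h : r < j, i ⟨r, h⟩ = i ℓ) ⟨ℓ.1, ℓ.2, rfl⟩

open scoped Classical in
lemma fo_spec (i : Fin j → Fin K) (ℓ : Fin j) : ∃ h : fo i ℓ < j, i ⟨fo i ℓ, h⟩ = i ℓ :=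
  Nat.find_spec (p := fun r => ∃ h : r < j, i ⟨r, h⟩ = i ℓ) ⟨ℓ.1, ℓ.2, rfl⟩

lemma fo_lt (i : Fin j → Fin K) (ℓ : Fin j) : fo i ℓ < j := (fo_spec i ℓ).1

noncomputable def foFin (i : Fin j → Fin K) (ℓ : Fin j) : Fin j := ⟨fo i ℓ, fo_lt i ℓ⟩

lemma i_foFin (i : Fin j → Fin K) (ℓ : Fin j) : i (foFin i ℓ) = i ℓ := (fo_spec i ℓ).2

open scoped Classical in
lemma fo_le (i : Fin j → Fin K) (ℓ : Fin j) : fo i ℓ ≤ ℓ.val :=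
  Nat.find_le ⟨ℓ.2, rfl⟩

open scoped Classical in
lemma fo_min (i : Fin j → Fin K) (ℓ : Fin j) {r : ℕ} (hr : r < fo i ℓ) (h : r < j) :
    i ⟨r, h⟩ ≠ i ℓ := by
  have := Nat.find_min (p := fun r => ∃ h : r < j, i ⟨r, h⟩ = i ℓ) ⟨ℓ.1, ℓ.2, rfl⟩ hr
  intro hc
  exact this ⟨h, hc⟩

lemma fo_congr (i : Fin j → Fin K) {a b : Fin j} (h : i a = i b) : fo i a = fo i b := by
  apply le_antisymm
  · obtain ⟨hb, hb2⟩ := fo_spec i b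
    exact Nat.le_of_not_lt (fun hc => fo_min i a hc hb (by rw [hb2, h]))
  · obtain ⟨ha, ha2⟩ := fo_spec i a
    exact Nat.le_of_not_lt (fun hc => fo_min i b hc ha (by rw [ha2, h]))

/-- the pattern of an index sequence -/
noncomputable def patt (i : Fin j → Fin K) (ℓ : Fin j) : ℕ := fo i ℓ + 1

lemma patt_eq_iff (i : Fin j → Fin K) (a b : Fin j) : patt i a = patt i b ↔ i a = i b := by
  constructor
  · intro h
    have h' : fo i a = fo i b := by simpa [patt] using h
    have := i_foFin i a
    rw [show foFin i a = foFin i b from Fin.ext h'] at this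
    rw [← this, i_foFin i b]
  · intro h; simp [patt, fo_congr i h]

lemma patt_isPatternSeq (i : Fin j → Fin K) : IsPatternSeq j (patt i) := by
  constructor
  · intro h0
    have h1 : fo i ⟨0, h0⟩ ≤ 0 := fo_le i ⟨0, h0⟩
    simp only [patt]
    omega
  · intro ℓ _
    rcases Nat.lt_or_ge (fo i ℓ) ℓ.val with h | h
    · right
      refine ⟨foFin i ℓ, ?_, ?_⟩
      · exact Fin.lt_def.mpr h
      · rw [(patt_eq_iff i ℓ (foFin i ℓ)).mpr (i_foFin i ℓ).symm]
    · left
      have := fo_le i ℓ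
      simp only [patt]
      omega

lemma patt_le (i : Fin j → Fin K) (ℓ : Fin j) : patt i ℓ ≤ ℓ.val + 1 := by
  have := fo_le i ℓ; simp only [patt]; omega

lemma patt_pos (i : Fin j → Fin K) (ℓ : Fin j) : 1 ≤ patt i ℓ := by simp [patt]

-- bounds for pattern sequences
lemma ps_bounds {s : Fin j → ℕ} (hs : IsPatternSeq j s) :
    ∀ n : ℕ, ∀ h : n < j, 1 ≤ s ⟨n, h⟩ ∧ s ⟨n, h⟩ ≤ n + 1 := by
  intro n
  induction n using Nat.strong_induction_on with
  | _ n ih =>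
    intro h
    rcases Nat.eq_zero_or_pos n with h0 | h0
    · subst h0
      rw [hs.1 h]
      omega
    · rcases hs.2 ⟨n, h⟩ h0 with h1 | ⟨q, hq, h1⟩
      · simp only [Fin.val_mk] at h1
        rw [h1]; omega
      · have hqn : q.val < n := by simpa [Fin.lt_def] using hq
        have h3 := ih q.val hqn q.isLt
        simp only [Fin.eta] at h3
        rw [h1]
        omega

lemma ps_first {s : Fin j → ℕ} (hs : IsPatternSeq j s) :
    ∀ n : ℕ, ∀ h : n < j, ∃ h' : s ⟨n, h⟩ - 1 < j, s ⟨s ⟨n, h⟩ - 1, h'⟩ = s ⟨n, h⟩ := by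
  intro n
  induction n using Nat.strong_induction_on with
  | _ n ih =>
    intro h
    rcases Nat.eq_zero_or_pos n with h0 | h0
    · subst h0
      rw [hs.1 h]
      exact ⟨h, hs.1 h⟩
    · rcases hs.2 ⟨n, h⟩ h0 with h1 | ⟨q, hq, h1⟩
      · simp only [Fin.val_mk] at h1
        have hn : s ⟨n, h⟩ - 1 = n := by simp [h1]
        exact ⟨by rw [hn]; exact h, congrArg s (Fin.ext hn)⟩
      · have hqn : q.val < n := by simpa [Fin.lt_def] using hq
        obtain ⟨h', h2⟩ := ih q.val hqn q.isLt
        simp only [Fin.eta] at h' h2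
        rw [h1]
        exact ⟨h', h2⟩

end Pattern

section Canon

variable {K j : ℕ}

open scoped Classical in
lemma fo_le_of (i : Fin j → Fin K) {ℓ : Fin j} {r : ℕ} (h : r < j) (he : i ⟨r, h⟩ = i ℓ) :
    fo i ℓ ≤ r :=
  Nat.find_le ⟨h, he⟩

/-- canonical index sequence of a pattern -/
def canSeq (hK : 0 < K) (s : Fin j → ℕ) : Fin j → Fin K :=
  fun ℓ => ⟨(s ℓ - 1) % K, Nat.mod_lt _ hK⟩

lemma canSeq_val (hK : 0 < K) (hjK : j ≤ K) {s : Fin j → ℕ} (hs : IsPatternSeq j s)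
    (ℓ : Fin j) : (canSeq hK s ℓ).val = s ℓ - 1 := by
  have hb := ps_bounds hs ℓ.val ℓ.isLt
  rw [Fin.eta] at hb
  have : s ℓ - 1 < K := by omega
  exact Nat.mod_eq_of_lt this

lemma canSeq_eq_iff (hK : 0 < K) (hjK : j ≤ K) {s : Fin j → ℕ} (hs : IsPatternSeq j s)
    (a b : Fin j) : canSeq hK s a = canSeq hK s b ↔ s a = s b := by
  have ha := ps_bounds hs a.val a.isLt
  have hb := ps_bounds hs b.val b.isLt
  rw [Fin.eta] at ha hb
  rw [Fin.ext_iff, canSeq_val hK hjK hs, canSeq_val hK hjK hs]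
  omega

lemma patt_canSeq (hK : 0 < K) (hjK : j ≤ K) {s : Fin j → ℕ} (hs : IsPatternSeq j s) :
    patt (canSeq hK s) = s := by
  funext ℓ
  have hb := ps_bounds hs ℓ.val ℓ.isLt
  rw [Fin.eta] at hb
  have hd : s ℓ - 1 < j := by omega
  obtain ⟨h', hfirst⟩ := ps_first hs ℓ.val ℓ.isLt
  simp only [Fin.eta] at h' hfirst
  have hfo_le : fo (canSeq hK s) ℓ ≤ s ℓ - 1 := by
    apply fo_le_of _ hd
    rw [canSeq_eq_iff hK hjK hs]
    exact hfirst
  have hfo_ge : ¬ (fo (canSeq hK s) ℓ < s ℓ - 1) := by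
    intro hc
    obtain ⟨hlt, hspec⟩ := fo_spec (canSeq hK s) ℓ
    rw [canSeq_eq_iff hK hjK hs] at hspec
    have := ps_bounds hs (fo (canSeq hK s) ℓ) hlt
    omega
  simp only [patt]
  omega

open scoped Classical in
lemma exists_perm_comp {α : Type*} [Fintype α] {ι : Type*} (f g : ι → α)
    (h : ∀ a b : ι, f a = f b ↔ g a = g b) :
    ∃ σ : Equiv.Perm α, ∀ x : ι, σ (f x) = g x := by
  classical
  set p : α → Prop := fun y => y ∈ Set.range f with hp
  set q : α → Prop := fun y => y ∈ Set.range g with hq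
  have hFdef : ∀ y : {y // p y}, ∃ a : ι, f a = y.1 := fun y => y.2
  set F : {y // p y} → {y // q y} := fun y => ⟨g (hFdef y).choose, ⟨_, rfl⟩⟩ with hF
  have hFval : ∀ (y : {y // p y}) (a : ι), f a = y.1 → (F y).1 = g a := by
    intro y a ha
    simp only [hF]
    have h2 := (hFdef y).choose_spec
    exact (h _ _).mp (h2.trans ha.symm)
  have hFbij : Function.Bijective F := by
    constructor
    · intro y1 y2 he
      have h1 := (hFdef y1).choose_spec
      have h2 := (hFdef y2).choose_spec
      have : g (hFdef y1).choose = g (hFdef y2).choose := by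
        simpa [hF] using congrArg Subtype.val he
      have := (h _ _).mpr this
      exact Subtype.ext (h1 ▸ this ▸ h2)
    · rintro ⟨y, b, rfl⟩
      refine ⟨⟨f b, ⟨b, rfl⟩⟩, ?_⟩
      exact Subtype.ext (hFval ⟨f b, ⟨b, rfl⟩⟩ b rfl)
  set e : {y // p y} ≃ {y // q y} := Equiv.ofBijective F hFbij with he
  have hcard : Fintype.card {y // ¬ p y} = Fintype.card {y // ¬ q y} := by
    rw [Fintype.card_subtype_compl, Fintype.card_subtype_compl, Fintype.card_congr e]
  set e' : {y // ¬ p y} ≃ {y // ¬ q y} := Fintype.equivOfCardEq hcard with he'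
  refine ⟨Equiv.subtypeCongr e e', ?_⟩
  intro x
  have hx : p (f x) := ⟨x, rfl⟩
  have happ : Equiv.subtypeCongr e e' (f x) = (e ⟨f x, hx⟩).1 := by
    simp [Equiv.subtypeCongr, hx]
  rw [happ]
  exact hFval ⟨f x, hx⟩ x rfl

end Canon

open Finset in
open scoped Classical in
lemma sumW_invariant {K j : ℕ} (m l : Fin j → ℕ) (i i' : Fin j → Fin K)
    (hii : ∀ a b : Fin j, i a = i b ↔ i' a = i' b) :
    (∑ W : MsgTuple K j m, ∏ q ∈ univ.filter (fun q : Fin j => 1 ≤ q.val),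
      (if (∀ ℓ : Fin j, ℓ < q → W (i q) ℓ = W (i ℓ) ℓ) then (1:ℚ) else (2:ℚ)^(-(l q : ℤ))))
    = (∑ W : MsgTuple K j m, ∏ q ∈ univ.filter (fun q : Fin j => 1 ≤ q.val),
      (if (∀ ℓ : Fin j, ℓ < q → W (i' q) ℓ = W (i' ℓ) ℓ) then (1:ℚ) else (2:ℚ)^(-(l q : ℤ)))) := by
  obtain ⟨σ, hσ⟩ := exists_perm_comp i' i (fun a b => (hii a b).symm)
  set e : MsgTuple K j m ≃ MsgTuple K j m :=
    { toFun := fun W => fun k => W (σ k)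
      invFun := fun W => fun k => W (σ.symm k)
      left_inv := fun W => by funext k; simp
      right_inv := fun W => by funext k; simp } with he
  apply Fintype.sum_equiv e
  intro W
  apply Finset.prod_congr rfl
  intro q _
  apply if_congr _ rfl rfl
  have hW : ∀ x : Fin j, (e W) (i' x) = W (i x) := by
    intro x
    simp only [he, Equiv.coe_fn_mk]
    rw [hσ x]
  constructor
  · intro hP ℓ hℓ
    rw [hW, hW]; exact hP ℓ hℓ
  · intro hP ℓ hℓ
    have := hP ℓ hℓ
    rwa [hW, hW] at this

open Finset in
open scoped Classical in
lemma fiber_card {K j : ℕ} (hj : 0 < j) (hjK : j ≤ K) (hK : 0 < K)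
    {s : Fin j → ℕ} (hs : IsPatternSeq j s) :
    Fintype.card {i : Fin j → Fin K // i ⟨0, hj⟩ = ⟨0, hK⟩ ∧ patt i = s}
      = ∏ t ∈ Finset.Icc 1 ((Finset.univ.image s).card - 1), (K - t) := by
  set D : Finset (Fin j) := univ.filter (fun ℓ : Fin j => s ℓ = ℓ.val + 1) with hD
  -- Step A : d(s) = D.card
  have himg : univ.image s = D.image (fun ℓ : Fin j => ℓ.val + 1) := by
    ext v
    simp only [Finset.mem_image, Finset.mem_filter, Finset.mem_univ, true_and, hD]
    constructor
    · rintro ⟨ℓ, -, rfl⟩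
      have hb := ps_bounds hs ℓ.val ℓ.isLt
      rw [Fin.eta] at hb
      obtain ⟨h', hfirst⟩ := ps_first hs ℓ.val ℓ.isLt
      simp only [Fin.eta] at h' hfirst
      refine ⟨⟨s ℓ - 1, h'⟩, ?_, ?_⟩
      · simp only [Fin.val_mk]
        rw [hfirst]; omega
      · simp only [Fin.val_mk]; omega
    · rintro ⟨ℓ, hℓ, rfl⟩
      exact ⟨ℓ, hℓ⟩
  have hd : (univ.image s).card = D.card := by
    rw [himg]
    exact Finset.card_image_of_injOn (fun a _ b _ hab => Fin.ext (by omega))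
  -- 0 is in D
  have h0D : (⟨0, hj⟩ : Fin j) ∈ D := by
    simp only [hD, Finset.mem_filter, Finset.mem_univ, true_and]
    exact hs.1 hj
  -- facts about fibers
  have hfo_eq : ∀ (i : Fin j → Fin K), patt i = s → ∀ ℓ : Fin j, fo i ℓ = s ℓ - 1 := by
    intro i hpi ℓ
    have : patt i ℓ = s ℓ := by rw [hpi]
    simp only [patt] at this
    omega
  -- the equivalence with embeddings
  set X := {x : Fin j // s x = x.val + 1 ∧ x.val ≠ 0} with hX
  set Y := {y : Fin K // y ≠ ⟨0, hK⟩} with hY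
  set Fib := {i : Fin j → Fin K // i ⟨0, hj⟩ = ⟨0, hK⟩ ∧ patt i = s} with hFib
  have keyΦ : ∀ (i : Fib) (x : X), i.1 x.1 ≠ ⟨0, hK⟩ := by
    rintro ⟨i, hi0, hpi⟩ ⟨x, hx1, hx2⟩
    intro hc
    have hfo : fo i x = s x - 1 := hfo_eq i hpi x
    rw [hx1] at hfo
    simp only [Nat.add_sub_cancel] at hfo
    have h0lt : 0 < fo i x := by omega
    have hne0 := fo_min i x h0lt hj
    exact hne0 (hi0.trans hc.symm)
  have injΦ : ∀ (i : Fib) (x x' : X), i.1 x.1 = i.1 x'.1 → x = x' := by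
    rintro ⟨i, hi0, hpi⟩ ⟨x, hx1, hx2⟩ ⟨x', hx1', hx2'⟩ hxx
    have h1 : fo i x = x.val := by
      have := hfo_eq i hpi x; rw [hx1] at this; omega
    have h2 : fo i x' = x'.val := by
      have := hfo_eq i hpi x'; rw [hx1'] at this; omega
    have := fo_congr i hxx
    rw [h1, h2] at this
    exact Subtype.ext (Fin.ext this)
  set Φ : Fib → (X ↪ Y) := fun i =>
    ⟨fun x => ⟨i.1 x.1, keyΦ i x⟩, fun x x' hxx => injΦ i x x' (by
      simpa using congrArg Subtype.val hxx)⟩ with hΦ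
  -- inverse construction
  set Fm : (X ↪ Y) → ℕ → Fin K := fun e v =>
    if h : 2 ≤ v ∧ ∃ hv : v - 1 < j, s ⟨v - 1, hv⟩ = (v - 1) + 1 then
      (e ⟨⟨v - 1, h.2.choose⟩, ⟨h.2.choose_spec, by simp only [Fin.val_mk]; omega⟩⟩).1
    else ⟨0, hK⟩ with hFm
  have hFm_apply : ∀ (e : X ↪ Y) (v : ℕ), Fm e v =
      if h : 2 ≤ v ∧ ∃ hv : v - 1 < j, s ⟨v - 1, hv⟩ = (v - 1) + 1 then
        (e ⟨⟨v - 1, h.2.choose⟩, ⟨h.2.choose_spec, by simp only [Fin.val_mk]; omega⟩⟩).1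
      else ⟨0, hK⟩ := fun e v => rfl
  have hcond : ∀ ℓ : Fin j, s ℓ ≠ 1 →
      (2 ≤ s ℓ ∧ ∃ hv : s ℓ - 1 < j, s ⟨s ℓ - 1, hv⟩ = (s ℓ - 1) + 1) := by
    intro ℓ hne
    have hb := ps_bounds hs ℓ.val ℓ.isLt
    rw [Fin.eta] at hb
    obtain ⟨h', hfirst⟩ := ps_first hs ℓ.val ℓ.isLt
    simp only [Fin.eta] at h' hfirst
    exact ⟨by omega, h', by rw [hfirst]; omega⟩
  have hFm_ne : ∀ (e : X ↪ Y) (v : ℕ),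
      (2 ≤ v ∧ ∃ hv : v - 1 < j, s ⟨v - 1, hv⟩ = (v - 1) + 1) → Fm e v ≠ ⟨0, hK⟩ := by
    intro e v h
    rw [hFm_apply, dif_pos h]
    exact (e _).2
  have hFm_iff : ∀ (e : X ↪ Y) (a b : Fin j), Fm e (s a) = Fm e (s b) ↔ s a = s b := by
    intro e a b
    constructor
    · intro hfm
      by_cases ha : s a = 1 <;> by_cases hb : s b = 1
      · rw [ha, hb]
      · exfalso
        have hcb := hcond b hb
        rw [hFm_apply, hFm_apply] at hfm
        rw [dif_neg (by rw [ha]; rintro ⟨h2, -⟩; omega), dif_pos hcb] at hfm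
        exact (e _).2 hfm.symm
      · exfalso
        have hca := hcond a ha
        rw [hFm_apply, hFm_apply] at hfm
        rw [dif_pos hca, dif_neg (by rw [hb]; rintro ⟨h2, -⟩; omega)] at hfm
        exact (e _).2 hfm
      · have hca := hcond a ha
        have hcb := hcond b hb
        rw [hFm_apply, hFm_apply] at hfm
        rw [dif_pos hca, dif_pos hcb] at hfm
        have := e.injective (Subtype.ext hfm)
        have hval := congrArg (fun x : X => x.1.val) this
        simp only [Fin.val_mk] at hval
        omega
    · intro hab; rw [hab]
  -- Ψ
  have hΨprop : ∀ e : X ↪ Y,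
      (fun ℓ => Fm e (s ℓ)) ⟨0, hj⟩ = ⟨0, hK⟩ ∧ patt (fun ℓ => Fm e (s ℓ)) = s := by
    intro e
    constructor
    · show Fm e (s ⟨0, hj⟩) = ⟨0, hK⟩
      rw [hs.1 hj, hFm_apply]
      rw [dif_neg (by rintro ⟨h2, -⟩; omega)]
    · funext ℓ
      set i : Fin j → Fin K := fun ℓ => Fm e (s ℓ) with hi
      have hb := ps_bounds hs ℓ.val ℓ.isLt
      rw [Fin.eta] at hb
      obtain ⟨h', hfirst⟩ := ps_first hs ℓ.val ℓ.isLt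
      simp only [Fin.eta] at h' hfirst
      have hle : fo i ℓ ≤ s ℓ - 1 := by
        apply fo_le_of _ h'
        show Fm e (s ⟨s ℓ - 1, h'⟩) = Fm e (s ℓ)
        rw [(hFm_iff e _ _).mpr hfirst]
      have hge : ¬ (fo i ℓ < s ℓ - 1) := by
        intro hc
        obtain ⟨hlt, hspec⟩ := fo_spec i ℓ
        have : s ⟨fo i ℓ, hlt⟩ = s ℓ := (hFm_iff e _ _).mp hspec
        have := ps_bounds hs (fo i ℓ) hlt
        omega
      simp only [patt]
      omega
  set Ψ : (X ↪ Y) → Fib := fun e => ⟨fun ℓ => Fm e (s ℓ), hΨprop e⟩ with hΨ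
  -- left inverse
  have hleft : ∀ i : Fib, Ψ (Φ i) = i := by
    rintro ⟨i, hi0, hpi⟩
    apply Subtype.ext
    funext ℓ
    show Fm (Φ ⟨i, hi0, hpi⟩) (s ℓ) = i ℓ
    by_cases hone : s ℓ = 1
    · rw [hFm_apply]
      rw [dif_neg (by rw [hone]; rintro ⟨h2, -⟩; omega)]
      have hfo : fo i ℓ = 0 := by have := hfo_eq i hpi ℓ; omega
      obtain ⟨hlt, hspec⟩ := fo_spec i ℓ
      have : (⟨fo i ℓ, hlt⟩ : Fin j) = ⟨0, hj⟩ := Fin.ext hfo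
      rw [this] at hspec
      rw [← hspec, hi0]
    · have hc := hcond ℓ hone
      rw [hFm_apply, dif_pos hc]
      show i _ = i ℓ
      have hfo : fo i ℓ = s ℓ - 1 := hfo_eq i hpi ℓ
      obtain ⟨hlt, hspec⟩ := fo_spec i ℓ
      have heq : (⟨fo i ℓ, hlt⟩ : Fin j) = ⟨s ℓ - 1, hc.2.choose⟩ := Fin.ext hfo
      exact (congrArg i heq.symm).trans hspec
  -- right inverse
  have hright : ∀ e : X ↪ Y, Φ (Ψ e) = e := by
    intro e
    apply Function.Embedding.ext
    rintro ⟨x, hx1, hx2⟩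
    apply Subtype.ext
    show Fm e (s x) = (e ⟨x, hx1, hx2⟩).1
    have hone : s x ≠ 1 := by rw [hx1]; omega
    have hc := hcond x hone
    rw [hFm_apply, dif_pos hc]
    exact congrArg (fun z : X => (e z).1)
      (Subtype.ext (Fin.ext (by simp only [Fin.val_mk]; rw [hx1]; omega)))
  have hEquiv : Fintype.card Fib = Fintype.card (X ↪ Y) :=
    Fintype.card_congr ⟨Φ, Ψ, hleft, hright⟩
  -- card computations
  have hcX : Fintype.card X = D.card - 1 := by
    rw [Fintype.card_subtype]
    have : univ.filter (fun x : Fin j => s x = x.val + 1 ∧ x.val ≠ 0)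
        = D.erase ⟨0, hj⟩ := by
      ext x
      simp only [Finset.mem_filter, Finset.mem_univ, true_and, Finset.mem_erase, hD]
      constructor
      · rintro ⟨h1, h2⟩
        exact ⟨fun hc => h2 (by rw [hc]), h1⟩
      · rintro ⟨h1, h2⟩
        refine ⟨h2, fun hc => h1 (Fin.ext hc)⟩
    rw [this, Finset.card_erase_of_mem h0D]
  have hcY : Fintype.card Y = K - 1 := by
    have h1 : Fintype.card Y = Fintype.card {y : Fin K // ¬ (y = ⟨0, hK⟩)} := rfl
    rw [h1, Fintype.card_subtype_compl, Fintype.card_subtype_eq, Fintype.card_fin]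
  rw [hEquiv, Fintype.card_embedding_eq, hcX, hcY, hd]
  rw [Nat.descFactorial_eq_prod_range]
  apply Finset.prod_nbij' (fun t => t + 1) (fun t => t - 1)
  · intro a ha
    simp only [Finset.mem_range] at ha
    simp only [Finset.mem_Icc]
    omega
  · intro a ha
    simp only [Finset.mem_Icc] at ha
    simp only [Finset.mem_range]
    omega
  · intro a ha
    omega
  · intro a ha
    simp only [Finset.mem_Icc] at ha
    omega
  · intro a ha
    simp only [Finset.mem_range] at ha
    omega

open Finset in
open scoped Classical in
lemma gsum_total (K j : ℕ) (m l : Fin j → ℕ) (W : MsgTuple K j m) (i : Fin j → Fin K) :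
    (∑ G : GenTuple j m l,
      if (∀ q : Fin j, 1 ≤ q.val →
          (∑ ℓ : Fin j, if h : ℓ.val < q.val
            then Matrix.vecMul (fun t => W (i ℓ) ℓ t + W (i q) ℓ t) (G q ℓ h)
            else 0) = 0) then (1:ℚ) else 0)
    = (Nat.card (GenTuple j m l) : ℚ)
      * ∏ q ∈ univ.filter (fun q : Fin j => 1 ≤ q.val),
        (if (∀ ℓ : Fin j, ℓ < q → W (i q) ℓ = W (i ℓ) ℓ) then (1:ℚ) else (2:ℚ)^(-(l q : ℤ))) := by
  set F : (q : Fin j) → ((ℓ : Fin j) → ℓ.val < q.val → Matrix (Fin (m ℓ)) (Fin (l q)) (ZMod 2)) → ℚ :=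
    fun q g => if 1 ≤ q.val then
          (if (∑ ℓ : Fin j, if h : ℓ.val < q.val
            then Matrix.vecMul (fun t => W (i ℓ) ℓ t + W (i q) ℓ t) (g ℓ h)
            else 0) = 0 then (1:ℚ) else 0) else 1 with hF
  have hind : ∀ G : GenTuple j m l,
      (if (∀ q : Fin j, 1 ≤ q.val →
          (∑ ℓ : Fin j, if h : ℓ.val < q.val
            then Matrix.vecMul (fun t => W (i ℓ) ℓ t + W (i q) ℓ t) (G q ℓ h)
            else 0) = 0) then (1:ℚ) else 0)
      = ∏ q : Fin j, F q (G q) := by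
    intro G
    simp only [hF]
    by_cases h : (∀ q : Fin j, 1 ≤ q.val →
        (∑ ℓ : Fin j, if h : ℓ.val < q.val
          then Matrix.vecMul (fun t => W (i ℓ) ℓ t + W (i q) ℓ t) (G q ℓ h)
          else 0) = 0)
    · rw [if_pos h]
      symm
      apply Finset.prod_eq_one
      intro q _
      by_cases h1 : 1 ≤ q.val
      · rw [if_pos h1, if_pos (h q h1)]
      · rw [if_neg h1]
    · rw [if_neg h]
      push_neg at h
      obtain ⟨q, hq1, hqne⟩ := h
      symm
      apply Finset.prod_eq_zero (Finset.mem_univ q)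
      rw [if_pos hq1, if_neg hqne]
  rw [Finset.sum_congr rfl (fun G _ => hind G), ← Fintype.prod_sum F]
  have hper : ∀ q : Fin j,
      (∑ g : ((ℓ : Fin j) → ℓ.val < q.val → Matrix (Fin (m ℓ)) (Fin (l q)) (ZMod 2)), F q g)
      = (Fintype.card ((ℓ : Fin j) → ℓ.val < q.val → Matrix (Fin (m ℓ)) (Fin (l q)) (ZMod 2)) : ℚ)
        * (if 1 ≤ q.val then
            (if (∀ ℓ : Fin j, ℓ < q → W (i q) ℓ = W (i ℓ) ℓ) then (1:ℚ) else (2:ℚ)^(-(l q : ℤ)))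
          else 1) := by
    intro q
    simp only [hF]
    by_cases h1 : 1 ≤ q.val
    · simp only [if_pos h1]
      exact qsum K j m l W i q
    · simp only [if_neg h1]
      rw [Finset.sum_const, Finset.card_univ, nsmul_eq_mul, mul_one]
  rw [Finset.prod_congr rfl (fun q _ => hper q), Finset.prod_mul_distrib]
  congr 1
  · rw [Nat.card_eq_fintype_card, Fintype.card_pi]
    push_cast
    rfl
  · rw [← Finset.prod_filter]

open Finset in
open scoped Classical in
noncomputable def PSF (j : ℕ) : Finset (Fin j → ℕ) :=
  (Fintype.piFinset (fun ℓ : Fin j => Finset.Icc 1 (ℓ.val + 1))).filter (IsPatternSeq j)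

open Finset in
open scoped Classical in
lemma mem_PSF {j : ℕ} (s : Fin j → ℕ) : s ∈ PSF j ↔ IsPatternSeq j s := by
  simp only [PSF, Finset.mem_filter, Fintype.mem_piFinset, Finset.mem_Icc]
  constructor
  · rintro ⟨-, h⟩; exact h
  · intro h
    refine ⟨fun ℓ => ?_, h⟩
    have := ps_bounds h ℓ.val ℓ.isLt
    rw [Fin.eta] at this
    exact this

open scoped Classical in
/-- Theorem 1: with a uniformly random message tuple `W` and, independently,
independent uniformly random generator blocks `G`, the expected number of erroneous
index sequences `i` (rooted at message 1, not identically 1) surviving all stages of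
tree decoding equals `Σ_{s ∈ P_j} n(s) · Φ_s(1/2) - 1`, where
`n(s) = ∏_{t=1}^{d(s)-1}(K-t)` and `Φ_s(1/2) = E_W[∏_{q=1}^{j-1} 2^{-l q · 1{A_{q,s}ᶜ}}]`. -/
theorem expected_number_erroneous_surviving_paths (K j : ℕ)
    (hj : 0 < j) (hjK : j ≤ K) (m l : Fin j → ℕ) :
    (∑ W : MsgTuple K j m, ∑ G : GenTuple j m l,
        (Nat.card {i : Fin j → Fin K //
            i ⟨0, hj⟩ = ⟨0, hj.trans_le hjK⟩ ∧
            (∃ t : Fin j, i t ≠ ⟨0, hj.trans_le hjK⟩) ∧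
            ∀ q : Fin j, 1 ≤ q.val →
              (∑ ℓ : Fin j, if h : ℓ.val < q.val
                  then Matrix.vecMul (fun t => W (i ℓ) ℓ t + W (i q) ℓ t) (G q ℓ h)
                  else 0) = 0} : ℚ))
        / ((Nat.card (MsgTuple K j m) : ℚ) * (Nat.card (GenTuple j m l) : ℚ))
      = (∑ᶠ s ∈ {s : Fin j → ℕ | IsPatternSeq j s},
          ((∏ t ∈ Finset.Icc 1 ((Finset.univ.image s).card - 1), (K - t) : ℕ) : ℚ)
            * ((∑ W : MsgTuple K j m,
                  ∏ q ∈ Finset.univ.filter (fun q : Fin j => 1 ≤ q.val),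
                    (if AEvent K j (hj.trans_le hjK) m s q W then (1 : ℚ)
                     else (2 : ℚ) ^ (-(l q : ℤ))))
                / (Nat.card (MsgTuple K j m) : ℚ))) - 1 := by
  classical
  have hK : 0 < K := hj.trans_le hjK
  set z0 : Fin K := ⟨0, hj.trans_le hjK⟩ with hz0
  set w0 : Fin j := ⟨0, hj⟩ with hw0
  have hFc0 : (Nat.card (MsgTuple K j m) : ℚ) ≠ 0 := by
    exact_mod_cast (Nat.card_pos (α := MsgTuple K j m)).ne'
  have hGc0 : (Nat.card (GenTuple j m l) : ℚ) ≠ 0 := by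
    exact_mod_cast (Nat.card_pos (α := GenTuple j m l)).ne'
  set cprod : (Fin j → Fin K) → MsgTuple K j m → ℚ := fun i W =>
    ∏ q ∈ Finset.univ.filter (fun q : Fin j => 1 ≤ q.val),
      (if (∀ ℓ : Fin j, ℓ < q → W (i q) ℓ = W (i ℓ) ℓ) then (1:ℚ) else (2:ℚ)^(-(l q : ℤ)))
    with hcprod
  -- Step 1: numerator per W
  have hnum : ∀ W : MsgTuple K j m,
      (∑ G : GenTuple j m l,
        (Nat.card {i : Fin j → Fin K //
            i w0 = z0 ∧ (∃ t : Fin j, i t ≠ z0) ∧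
            ∀ q : Fin j, 1 ≤ q.val →
              (∑ ℓ : Fin j, if h : ℓ.val < q.val
                  then Matrix.vecMul (fun t => W (i ℓ) ℓ t + W (i q) ℓ t) (G q ℓ h)
                  else 0) = 0} : ℚ))
      = (Nat.card (GenTuple j m l) : ℚ) * ∑ i : Fin j → Fin K,
          (if (i w0 = z0 ∧ ∃ t : Fin j, i t ≠ z0) then (1:ℚ) else 0) * cprod i W := by
    intro W
    have h1 : ∀ G : GenTuple j m l,
        (Nat.card {i : Fin j → Fin K //
            i w0 = z0 ∧ (∃ t : Fin j, i t ≠ z0) ∧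
            ∀ q : Fin j, 1 ≤ q.val →
              (∑ ℓ : Fin j, if h : ℓ.val < q.val
                  then Matrix.vecMul (fun t => W (i ℓ) ℓ t + W (i q) ℓ t) (G q ℓ h)
                  else 0) = 0} : ℚ)
        = ∑ i : Fin j → Fin K,
            (if (i w0 = z0 ∧ ∃ t : Fin j, i t ≠ z0) then (1:ℚ) else 0)
            * (if (∀ q : Fin j, 1 ≤ q.val →
              (∑ ℓ : Fin j, if h : ℓ.val < q.val
                  then Matrix.vecMul (fun t => W (i ℓ) ℓ t + W (i q) ℓ t) (G q ℓ h)
                  else 0) = 0) then (1:ℚ) else 0) := by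
      intro G
      rw [Nat.card_eq_fintype_card, Fintype.card_subtype]
      rw [← Finset.sum_boole]
      apply Finset.sum_congr rfl
      intro i _
      by_cases hA : (i w0 = z0 ∧ ∃ t : Fin j, i t ≠ z0)
      · by_cases hB : (∀ q : Fin j, 1 ≤ q.val →
              (∑ ℓ : Fin j, if h : ℓ.val < q.val
                  then Matrix.vecMul (fun t => W (i ℓ) ℓ t + W (i q) ℓ t) (G q ℓ h)
                  else 0) = 0)
        · rw [if_pos ⟨hA.1, hA.2, hB⟩, if_pos hA, if_pos hB, mul_one]
        · rw [if_neg (by rintro ⟨-, -, hc⟩; exact hB hc), if_neg hB, mul_zero]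
      · rw [if_neg (fun hP => hA ⟨hP.1, hP.2.1⟩), if_neg hA, zero_mul]
    rw [Finset.sum_congr rfl (fun G _ => h1 G), Finset.sum_comm, Finset.mul_sum]
    apply Finset.sum_congr rfl
    intro i _
    rw [← Finset.mul_sum, gsum_total K j m l W i]
    show _ = (Nat.card (GenTuple j m l) : ℚ) *
      ((if (i w0 = z0 ∧ ∃ t : Fin j, i t ≠ z0) then (1:ℚ) else 0) *
        ∏ q ∈ Finset.univ.filter (fun q : Fin j => 1 ≤ q.val),
          (if (∀ ℓ : Fin j, ℓ < q → W (i q) ℓ = W (i ℓ) ℓ) then (1:ℚ) else (2:ℚ)^(-(l q : ℤ))))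
    ring
  rw [Finset.sum_congr rfl (fun W _ => hnum W), ← Finset.mul_sum, Finset.sum_comm]
  -- Step 2
  have hstep2 : (∑ i : Fin j → Fin K, ∑ W : MsgTuple K j m,
      (if (i w0 = z0 ∧ ∃ t : Fin j, i t ≠ z0) then (1:ℚ) else 0) * cprod i W)
      = (∑ i ∈ Finset.univ.filter (fun i : Fin j → Fin K => i w0 = z0),
          ∑ W : MsgTuple K j m, cprod i W) - (Nat.card (MsgTuple K j m) : ℚ) := by
    have h2 : ∀ i : Fin j → Fin K, (∑ W : MsgTuple K j m,
        (if (i w0 = z0 ∧ ∃ t : Fin j, i t ≠ z0) then (1:ℚ) else 0) * cprod i W)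
        = (if (i w0 = z0 ∧ ∃ t : Fin j, i t ≠ z0) then (1:ℚ) else 0)
          * ∑ W : MsgTuple K j m, cprod i W := by
      intro i
      rw [← Finset.mul_sum]
    rw [Finset.sum_congr rfl (fun i _ => h2 i)]
    have h3 : (∑ i : Fin j → Fin K,
        (if (i w0 = z0 ∧ ∃ t : Fin j, i t ≠ z0) then (1:ℚ) else 0)
          * ∑ W : MsgTuple K j m, cprod i W)
        = ∑ i ∈ Finset.univ.filter
            (fun i : Fin j → Fin K => i w0 = z0 ∧ ∃ t : Fin j, i t ≠ z0),
            ∑ W : MsgTuple K j m, cprod i W := by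
      rw [Finset.sum_filter]
      apply Finset.sum_congr rfl
      intro i _
      by_cases hA : (i w0 = z0 ∧ ∃ t : Fin j, i t ≠ z0) <;> simp [hA]
    rw [h3]
    have h4 : Finset.univ.filter (fun i : Fin j → Fin K => i w0 = z0 ∧ ∃ t : Fin j, i t ≠ z0)
        = (Finset.univ.filter (fun i : Fin j → Fin K => i w0 = z0)).erase (fun _ => z0) := by
      ext i
      simp only [Finset.mem_filter, Finset.mem_univ, true_and, Finset.mem_erase]
      constructor
      · rintro ⟨h5, t, h6⟩
        refine ⟨fun hc => h6 ?_, h5⟩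
        rw [hc]
      · rintro ⟨h5, h6⟩
        refine ⟨h6, ?_⟩
        by_contra h7
        push_neg at h7
        exact h5 (funext h7)
    rw [h4, Finset.sum_erase_eq_sub (by simp)]
    congr 1
    have hone : ∀ W : MsgTuple K j m, cprod (fun _ => z0) W = 1 := by
      intro W
      show (∏ q ∈ Finset.univ.filter (fun q : Fin j => 1 ≤ q.val),
        (if (∀ ℓ : Fin j, ℓ < q → W ((fun _ => z0) q) ℓ = W ((fun _ => z0) ℓ) ℓ)
          then (1:ℚ) else (2:ℚ)^(-(l q : ℤ)))) = 1
      apply Finset.prod_eq_one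
      intro q _
      rw [if_pos]
      intro ℓ _
      rfl
    rw [Finset.sum_congr rfl (fun W _ => hone W)]
    simp [Finset.card_univ, Nat.card_eq_fintype_card]
  rw [hstep2]
  -- Step 5: group by pattern
  have hmaps : ∀ i ∈ Finset.univ.filter (fun i : Fin j → Fin K => i w0 = z0),
      patt i ∈ PSF j := fun i _ => (mem_PSF (patt i)).mpr (patt_isPatternSeq i)
  have hgroup : (∑ i ∈ Finset.univ.filter (fun i : Fin j → Fin K => i w0 = z0),
        ∑ W : MsgTuple K j m, cprod i W)
      = ∑ s ∈ PSF j,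
          ((∏ t ∈ Finset.Icc 1 ((Finset.univ.image s).card - 1), (K - t) : ℕ) : ℚ)
            * (∑ W : MsgTuple K j m,
                  ∏ q ∈ Finset.univ.filter (fun q : Fin j => 1 ≤ q.val),
                    (if AEvent K j (hj.trans_le hjK) m s q W then (1 : ℚ)
                     else (2 : ℚ) ^ (-(l q : ℤ)))) := by
    rw [← Finset.sum_fiberwise_of_maps_to hmaps (fun i => ∑ W : MsgTuple K j m, cprod i W)]
    apply Finset.sum_congr rfl
    intro s hsmem
    have hs : IsPatternSeq j s := (mem_PSF s).mp hsmem
    have hTcan : ∀ i ∈ (Finset.univ.filter (fun i : Fin j → Fin K => i w0 = z0)).filter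
        (fun i => patt i = s), (∑ W : MsgTuple K j m, cprod i W)
        = ∑ W : MsgTuple K j m,
            ∏ q ∈ Finset.univ.filter (fun q : Fin j => 1 ≤ q.val),
              (if AEvent K j (hj.trans_le hjK) m s q W then (1 : ℚ)
               else (2 : ℚ) ^ (-(l q : ℤ))) := by
      intro i hi
      simp only [Finset.mem_filter, Finset.mem_univ, true_and] at hi
      obtain ⟨hi0, hpi⟩ := hi
      have hii : ∀ a b : Fin j, i a = i b ↔ canSeq hK s a = canSeq hK s b := by
        intro a b
        rw [← patt_eq_iff, hpi, ← canSeq_eq_iff hK hjK hs]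
      have hmid := sumW_invariant (K := K) m l i (canSeq hK s) hii
      rw [show (∑ W : MsgTuple K j m, cprod i W)
          = ∑ W : MsgTuple K j m,
            ∏ q ∈ Finset.univ.filter (fun q : Fin j => 1 ≤ q.val),
              (if (∀ ℓ : Fin j, ℓ < q → W (i q) ℓ = W (i ℓ) ℓ)
                then (1:ℚ) else (2:ℚ)^(-(l q : ℤ))) from rfl]
      rw [hmid]
      apply Finset.sum_congr rfl
      intro W _
      apply Finset.prod_congr rfl
      intro q _
      apply if_congr _ rfl rfl
      constructor
      · intro hB ℓ hℓ _
        exact hB ℓ hℓ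
      · intro hA ℓ hℓ
        by_cases hsl : s ℓ = s q
        · have hcc : canSeq hK s ℓ = canSeq hK s q := (canSeq_eq_iff hK hjK hs ℓ q).mpr hsl
          rw [hcc]
        · exact hA ℓ hℓ hsl
    rw [Finset.sum_congr rfl hTcan, Finset.sum_const, nsmul_eq_mul]
    congr 1
    rw [Finset.filter_filter]
    have h5 : (Finset.univ.filter (fun i : Fin j → Fin K => i w0 = z0 ∧ patt i = s)).card
        = Fintype.card {i : Fin j → Fin K // i w0 = z0 ∧ patt i = s} :=
      (Fintype.card_subtype _).symm
    rw [h5]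
    rw [show Fintype.card {i : Fin j → Fin K // i w0 = z0 ∧ patt i = s}
        = Fintype.card {i : Fin j → Fin K // i ⟨0, hj⟩ = ⟨0, hK⟩ ∧ patt i = s} from rfl]
    rw [fiber_card hj hjK hK hs]
  rw [hgroup]
  -- Step 6: finsum to Finset sum
  have hfin : (∑ᶠ s ∈ {s : Fin j → ℕ | IsPatternSeq j s},
      ((∏ t ∈ Finset.Icc 1 ((Finset.univ.image s).card - 1), (K - t) : ℕ) : ℚ)
        * ((∑ W : MsgTuple K j m,
              ∏ q ∈ Finset.univ.filter (fun q : Fin j => 1 ≤ q.val),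
                (if AEvent K j (hj.trans_le hjK) m s q W then (1 : ℚ)
                 else (2 : ℚ) ^ (-(l q : ℤ))))
            / (Nat.card (MsgTuple K j m) : ℚ)))
      = ∑ s ∈ PSF j,
          ((∏ t ∈ Finset.Icc 1 ((Finset.univ.image s).card - 1), (K - t) : ℕ) : ℚ)
            * ((∑ W : MsgTuple K j m,
                  ∏ q ∈ Finset.univ.filter (fun q : Fin j => 1 ≤ q.val),
                    (if AEvent K j (hj.trans_le hjK) m s q W then (1 : ℚ)
                     else (2 : ℚ) ^ (-(l q : ℤ))))
                / (Nat.card (MsgTuple K j m) : ℚ)) := by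
    have hset : {s : Fin j → ℕ | IsPatternSeq j s} = ↑(PSF j) := by
      ext s
      rw [Set.mem_setOf_eq, Finset.mem_coe, mem_PSF]
    rw [hset, finsum_mem_coe_finset]
  rw [hfin]
  -- Step 7: final algebra
  have hsum7 : (∑ s ∈ PSF j,
      ((∏ t ∈ Finset.Icc 1 ((Finset.univ.image s).card - 1), (K - t) : ℕ) : ℚ)
        * ((∑ W : MsgTuple K j m,
              ∏ q ∈ Finset.univ.filter (fun q : Fin j => 1 ≤ q.val),
                (if AEvent K j (hj.trans_le hjK) m s q W then (1 : ℚ)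
                 else (2 : ℚ) ^ (-(l q : ℤ))))
            / (Nat.card (MsgTuple K j m) : ℚ)))
      = (∑ s ∈ PSF j,
          ((∏ t ∈ Finset.Icc 1 ((Finset.univ.image s).card - 1), (K - t) : ℕ) : ℚ)
            * (∑ W : MsgTuple K j m,
                  ∏ q ∈ Finset.univ.filter (fun q : Fin j => 1 ≤ q.val),
                    (if AEvent K j (hj.trans_le hjK) m s q W then (1 : ℚ)
                     else (2 : ℚ) ^ (-(l q : ℤ)))))
        / (Nat.card (MsgTuple K j m) : ℚ) := by
    rw [Finset.sum_div]
    apply Finset.sum_congr rfl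
    intro s _
    rw [mul_div_assoc]
  rw [hsum7]
  field_simp
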